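/- Let (θ_k, r_k) be the global AEGD iterates with effective step sizes η_k := η r_{k+1}/g(θ_k). Suppose f is L-smooth, has a minimizer θ* with minimum value f(θ*), and satisfies the Polyak–Łojasiewicz inequality with constant μ > 0. If η_j ≤ 1/L for all j with k₀ ≤ j < k (for some k₀ ≥ 0), then the iterates satisfy ∑_{k=k₀}^{∞} ‖θ_{k+1} − θ_k‖ ≤ (4/√(2μ)) √(f(θ_{k₀}) − f(θ*)); in particular the sequence (θ_k) is convergent. -/

import Mathlib

open Filter Topology Finset

section auxlemmas
open InnerProductSpace intervalIntegral

variable {E : Type*} [NormedAddCommGroup E] [InnerProductSpace ℝ E] [CompleteSpace E]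

private lemma aegd_grad_sqrt_shift (f : E → ℝ) (hf : Differentiable ℝ f) (c : ℝ)
    (hfc : ∀ x, 0 < f x + c) (x : E) :
    gradient (fun y => Real.sqrt (f y + c)) x
      = (1 / (2 * Real.sqrt (f x + c))) • gradient f x := by
  have hgf : HasGradientAt f (gradient f x) x := (hf x).hasGradientAt
  have h2 : HasFDerivAt (fun y => f y + c) (toDual ℝ E (gradient f x)) x :=
    hgf.hasFDerivAt.add_const c
  have hs : HasDerivAt Real.sqrt (1 / (2 * Real.sqrt (f x + c))) (f x + c) :=
    Real.hasDerivAt_sqrt (hfc x).ne'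
  have hcomp : HasFDerivAt (fun y => Real.sqrt (f y + c))
      ((1 / (2 * Real.sqrt (f x + c))) • toDual ℝ E (gradient f x)) x :=
    hs.comp_hasFDerivAt x h2
  have heq : toDual ℝ E ((1 / (2 * Real.sqrt (f x + c))) • gradient f x)
      = (1 / (2 * Real.sqrt (f x + c))) • toDual ℝ E (gradient f x) := by
    simp [map_smulₛₗ]
  have : HasGradientAt (fun y => Real.sqrt (f y + c))
      ((1 / (2 * Real.sqrt (f x + c))) • gradient f x) x :=
    hasGradientAt_iff_hasFDerivAt.mpr (heq ▸ hcomp)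
  exact this.gradient

private lemma aegd_descent_lemma (f : E → ℝ) (hf : Differentiable ℝ f) (L : ℝ) (hL : 0 < L)
    (hLip : ∀ u v, ‖gradient f u - gradient f v‖ ≤ L * ‖u - v‖) (x y : E) :
    f y ≤ f x + inner ℝ (gradient f x) (y - x) + L / 2 * ‖y - x‖ ^ 2 := by
  set d := y - x with hd
  have hcont : Continuous (gradient f) := by
    have : LipschitzWith (Real.toNNReal L) (gradient f) :=
      LipschitzWith.of_dist_le_mul (fun u v => by
        simpa [dist_eq_norm, Real.coe_toNNReal L hL.le] using hLip u v)
    exact this.continuous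
  set φ' : ℝ → ℝ := fun t => inner ℝ (gradient f (x + t • d)) d with hφ'
  have hline : ∀ t : ℝ, HasDerivAt (fun s : ℝ => x + s • d) d t := by
    intro t
    simpa using ((hasDerivAt_id t).smul_const d).const_add x
  have hφ : ∀ t : ℝ, HasDerivAt (fun s : ℝ => f (x + s • d)) (φ' t) t := by
    intro t
    have := (hf (x + t • d)).hasGradientAt.hasFDerivAt.comp_hasDerivAt t (hline t)
    simpa [hφ', toDual_apply_apply, Function.comp_def] using this
  have hcφ' : Continuous φ' := (hcont.comp (by continuity)).inner continuous_const
  have hint : f y - f x = ∫ t in (0:ℝ)..1, φ' t := by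
    rw [integral_eq_sub_of_hasDerivAt (fun t _ => hφ t) (hcφ'.intervalIntegrable 0 1)]
    simp [hd]
  have hbound : ∀ t ∈ Set.Icc (0:ℝ) 1,
      φ' t ≤ inner ℝ (gradient f x) d + L * t * ‖d‖ ^ 2 := by
    intro t ht
    have h1 : φ' t - inner ℝ (gradient f x) d
        = inner ℝ (gradient f (x + t • d) - gradient f x) d := by
      simp [hφ', inner_sub_left]
    have h2 : inner ℝ (gradient f (x + t • d) - gradient f x) d
        ≤ ‖gradient f (x + t • d) - gradient f x‖ * ‖d‖ := real_inner_le_norm _ _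
    have h3 : ‖gradient f (x + t • d) - gradient f x‖ ≤ L * (t * ‖d‖) := by
      have := hLip (x + t • d) x
      simpa [norm_smul, abs_of_nonneg ht.1] using this
    have h4 : ‖gradient f (x + t • d) - gradient f x‖ * ‖d‖ ≤ L * (t * ‖d‖) * ‖d‖ :=
      mul_le_mul_of_nonneg_right h3 (norm_nonneg _)
    nlinarith [norm_nonneg d]
  have hmono : (∫ t in (0:ℝ)..1, φ' t)
      ≤ ∫ t in (0:ℝ)..1, (inner ℝ (gradient f x) d + L * t * ‖d‖ ^ 2) := by
    apply integral_mono_on zero_le_one (hcφ'.intervalIntegrable 0 1)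
      ((by continuity : Continuous fun t : ℝ =>
        (inner ℝ (gradient f x) d : ℝ) + L * t * ‖d‖ ^ 2).intervalIntegrable 0 1)
      hbound
  have hval : (∫ t in (0:ℝ)..1, (inner ℝ (gradient f x) d + L * t * ‖d‖ ^ 2))
      = inner ℝ (gradient f x) d + L / 2 * ‖d‖ ^ 2 := by
    have h1 : IntervalIntegrable (fun _ : ℝ => (inner ℝ (gradient f x) d : ℝ))
        MeasureTheory.volume 0 1 := intervalIntegrable_const
    have h2 : IntervalIntegrable (fun t : ℝ => L * t * ‖d‖ ^ 2) MeasureTheory.volume 0 1 :=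
      (by continuity : Continuous fun t : ℝ => L * t * ‖d‖ ^ 2).intervalIntegrable 0 1
    rw [integral_add h1 h2]
    have : (∫ t in (0:ℝ)..1, L * t * ‖d‖ ^ 2)
        = (∫ t in (0:ℝ)..1, t) * (L * ‖d‖ ^ 2) := by
      rw [← integral_mul_const]
      congr 1; ext t; ring
    rw [this, integral_id]
    simp; ring
  linarith [hint ▸ (hmono.trans_eq hval)]

end auxlemmas

private lemma aegd_desc_arith (a G L fv fv' : ℝ) (ha : 0 < a) (hle : a * L ≤ 1)
    (h : fv' ≤ fv - a * G ^ 2 + L / 2 * (a ^ 2 * G ^ 2)) :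
    fv' ≤ fv - a / 2 * G ^ 2 := by
  nlinarith [mul_nonneg (sub_nonneg.mpr hle) (mul_nonneg ha.le (sq_nonneg G))]

private lemma aegd_step_arith (μ s a G Dj Dj1 : ℝ) (hμ : 0 < μ) (hs : s = Real.sqrt (2 * μ))
    (ha : 0 < a) (hGnn : 0 ≤ G) (hDjnn : 0 ≤ Dj) (hDj1nn : 0 ≤ Dj1)
    (hgap : a / 2 * G ^ 2 ≤ Dj - Dj1) (hPL : 2 * μ * Dj ≤ G ^ 2) :
    a * G ≤ 4 / s * (Real.sqrt Dj - Real.sqrt Dj1) := by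
  have hspos : 0 < s := hs ▸ Real.sqrt_pos.mpr (by positivity)
  have hDle : Dj1 ≤ Dj := by nlinarith [sq_nonneg G]
  have hmono : Real.sqrt Dj1 ≤ Real.sqrt Dj := Real.sqrt_le_sqrt hDle
  rcases eq_or_lt_of_le hGnn with hG0 | hGpos
  · rw [← hG0, mul_zero]
    exact mul_nonneg (by positivity) (by linarith)
  · have hDjpos : 0 < Dj := by
      rcases hDjnn.lt_or_eq with h | h
      · exact h
      · exfalso; nlinarith [mul_pos ha (mul_pos hGpos hGpos)]
    set u := Real.sqrt Dj with hu
    set v := Real.sqrt Dj1 with hv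
    have hupos : 0 < u := Real.sqrt_pos.mpr hDjpos
    have hvnn : 0 ≤ v := Real.sqrt_nonneg _
    have hu2 : u ^ 2 = Dj := Real.sq_sqrt hDjnn
    have hv2 : v ^ 2 = Dj1 := Real.sq_sqrt hDj1nn
    have hprod : (u - v) * (u + v) = Dj - Dj1 := by
      have : (u - v) * (u + v) = u ^ 2 - v ^ 2 := by ring
      rw [this, hu2, hv2]
    have hsu : s * u ≤ G := by
      have h3 : Real.sqrt (2 * μ * Dj) ≤ Real.sqrt (G ^ 2) := Real.sqrt_le_sqrt hPL
      rwa [Real.sqrt_mul (by positivity), Real.sqrt_sq hGnn, ← hs, ← hu] at h3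
    have huv : 0 ≤ u - v := by linarith
    have h2 : (u - v) * (u + v) ≤ (u - v) * (2 * u) :=
      mul_le_mul_of_nonneg_left (by linarith) huv
    have hB : a * G ^ 2 ≤ 4 * (u * (u - v)) := by nlinarith
    have hA : a * G * (s * u) ≤ a * G * G :=
      mul_le_mul_of_nonneg_left hsu (by positivity)
    have h5 : (a * G * s) * u ≤ (4 * (u - v)) * u := by nlinarith
    have h6 : a * G * s ≤ 4 * (u - v) := le_of_mul_le_mul_right h5 hupos
    rw [div_mul_eq_mul_div, le_div_iff₀ hspos]
    linarith

/-- For the global AEGD iterates, if `f` is `L`-smooth, has a minimizer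
`θ*`, satisfies the PL inequality with constant `μ > 0`, and the effective step sizes
satisfy `η_j ≤ 1/L` for all `j ≥ k₀`, then
`∑_{k=k₀}^∞ ‖θ_{k+1} − θ_k‖ ≤ (4/√(2μ)) √(f(θ_{k₀}) − f(θ*))`; in particular `(θ_k)`
converges. -/
theorem aegd_pl_finite_length {n : ℕ} (f : EuclideanSpace ℝ (Fin n) → ℝ)
    (hf : Differentiable ℝ f) (hbdd : ∃ B : ℝ, ∀ x, B ≤ f x)
    (c : ℝ) (hc : 0 < c) (hfc : ∀ x, 0 < f x + c)
    (g : EuclideanSpace ℝ (Fin n) → ℝ) (hg : g = fun x => Real.sqrt (f x + c))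
    (L : ℝ) (hL : 0 < L)
    (hLip : ∀ u v, ‖gradient f u - gradient f v‖ ≤ L * ‖u - v‖)
    (θstar : EuclideanSpace ℝ (Fin n)) (hmin : ∀ x, f θstar ≤ f x)
    (μ : ℝ) (hμ : 0 < μ)
    (hPL : ∀ x, μ * (f x - f θstar) ≤ 1 / 2 * ‖gradient f x‖ ^ 2)
    (η : ℝ) (hη : 0 < η)
    (θ : ℕ → EuclideanSpace ℝ (Fin n)) (r : ℕ → ℝ)
    (hr0 : r 0 = g (θ 0))
    (hr : ∀ k, r (k + 1) = r k / (1 + 2 * η * ‖gradient g (θ k)‖ ^ 2))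
    (hθ : ∀ k, θ (k + 1) = θ k - (2 * η * r (k + 1)) • gradient g (θ k))
    (ηk : ℕ → ℝ) (hηk : ∀ k, ηk k = η * r (k + 1) / g (θ k))
    (k₀ : ℕ) (hstep : ∀ j, k₀ ≤ j → ηk j ≤ 1 / L) :
    (∑' k : ℕ, ‖θ (k₀ + k + 1) - θ (k₀ + k)‖)
        ≤ 4 / Real.sqrt (2 * μ) * Real.sqrt (f (θ k₀) - f θstar) ∧
    ∃ θlim : EuclideanSpace ℝ (Fin n), Tendsto θ atTop (𝓝 θlim) := by
  have hgpos : ∀ x, 0 < g x := by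
    intro x; rw [hg]; exact Real.sqrt_pos.mpr (hfc x)
  have hgrad : ∀ x, gradient g x = (1 / (2 * g x)) • gradient f x := by
    intro x; rw [hg]; exact aegd_grad_sqrt_shift f hf c hfc x
  have hrpos : ∀ k, 0 < r k := by
    intro k
    induction k with
    | zero => rw [hr0]; exact hgpos _
    | succ k ih =>
        rw [hr k]
        exact div_pos ih (by positivity)
  have hηkpos : ∀ k, 0 < ηk k := by
    intro k; rw [hηk k]; exact div_pos (mul_pos hη (hrpos _)) (hgpos _)
  have hstepvec : ∀ k, θ (k + 1) - θ k = -(ηk k) • gradient f (θ k) := by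
    intro k
    rw [hθ k, hgrad (θ k), smul_smul, hηk k]
    rw [sub_sub_cancel_left, ← neg_smul]
    congr 1
    have := (hgpos (θ k)).ne'
    field_simp
  have hnorm : ∀ k, ‖θ (k + 1) - θ k‖ = ηk k * ‖gradient f (θ k)‖ := by
    intro k
    rw [hstepvec k, norm_smul, Real.norm_eq_abs, abs_neg, abs_of_pos (hηkpos k)]
  have hdesc : ∀ j, k₀ ≤ j →
      f (θ (j + 1)) ≤ f (θ j) - ηk j / 2 * ‖gradient f (θ j)‖ ^ 2 := by
    intro j hj
    have hd := aegd_descent_lemma f hf L hL hLip (θ j) (θ (j + 1))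
    rw [hstepvec j] at hd
    have hinner : (inner ℝ (gradient f (θ j)) (-(ηk j) • gradient f (θ j)) : ℝ)
        = -(ηk j) * ‖gradient f (θ j)‖ ^ 2 := by
      rw [real_inner_smul_right, real_inner_self_eq_norm_sq]
    have hnrm : ‖-(ηk j) • gradient f (θ j)‖ ^ 2
        = ηk j ^ 2 * ‖gradient f (θ j)‖ ^ 2 := by
      rw [norm_smul, Real.norm_eq_abs, abs_neg, abs_of_pos (hηkpos j), mul_pow]
    rw [hinner, hnrm] at hd
    have hle : ηk j * L ≤ 1 := by
      have h1 := hstep j hj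
      rw [le_div_iff₀ hL] at h1
      linarith
    exact aegd_desc_arith (ηk j) _ L _ _ (hηkpos j) hle (by linarith)
  set D : ℕ → ℝ := fun k => f (θ k) - f θstar with hD
  have hDnn : ∀ k, 0 ≤ D k := fun k => sub_nonneg.mpr (hmin _)
  set s : ℝ := Real.sqrt (2 * μ) with hs
  have hspos : 0 < s := Real.sqrt_pos.mpr (by positivity)
  have hkey : ∀ j, k₀ ≤ j →
      ‖θ (j + 1) - θ j‖ ≤ 4 / s * (Real.sqrt (D j) - Real.sqrt (D (j + 1))) := by
    intro j hj
    rw [hnorm j]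
    apply aegd_step_arith μ s (ηk j) ‖gradient f (θ j)‖ (D j) (D (j + 1)) hμ hs
      (hηkpos j) (norm_nonneg _) (hDnn j) (hDnn (j + 1))
    · have := hdesc j hj
      simp only [hD]
      linarith
    · have := hPL (θ j)
      simp only [hD]
      linarith
  have hpartial : ∀ N : ℕ, ∑ k ∈ range N, ‖θ (k₀ + k + 1) - θ (k₀ + k)‖
      ≤ 4 / s * Real.sqrt (D k₀) := by
    intro N
    have h1 : ∑ k ∈ range N, ‖θ (k₀ + k + 1) - θ (k₀ + k)‖
        ≤ ∑ k ∈ range N,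
            (4 / s * (Real.sqrt (D (k₀ + k)) - Real.sqrt (D (k₀ + k + 1)))) := by
      apply Finset.sum_le_sum
      intro k _
      exact hkey (k₀ + k) (Nat.le_add_right _ _)
    have h2 : ∑ k ∈ range N,
          (4 / s * (Real.sqrt (D (k₀ + k)) - Real.sqrt (D (k₀ + k + 1))))
        = 4 / s * (Real.sqrt (D k₀) - Real.sqrt (D (k₀ + N))) := by
      rw [← Finset.mul_sum]
      congr 1
      have := Finset.sum_range_sub' (fun k => Real.sqrt (D (k₀ + k))) N
      simpa [add_assoc] using this
    have h3 : 4 / s * (Real.sqrt (D k₀) - Real.sqrt (D (k₀ + N)))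
        ≤ 4 / s * Real.sqrt (D k₀) := by
      apply mul_le_mul_of_nonneg_left _ (by positivity)
      linarith [Real.sqrt_nonneg (D (k₀ + N))]
    linarith
  have hsummable : Summable (fun k : ℕ => ‖θ (k₀ + k + 1) - θ (k₀ + k)‖) :=
    summable_of_sum_range_le (fun k => norm_nonneg _) hpartial
  constructor
  · exact Summable.tsum_le_of_sum_range_le hsummable hpartial
  · have hsum2 : Summable (fun k : ℕ => ‖θ (k + k₀ + 1) - θ (k + k₀)‖) := by
      apply hsummable.congr
      intro k; rw [add_comm k₀ k]
    have hsum3 : Summable (fun k : ℕ => ‖θ (k + 1) - θ k‖) :=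
      (summable_nat_add_iff k₀).mp hsum2
    have hcauchy : CauchySeq θ := by
      apply cauchySeq_of_summable_dist
      apply hsum3.congr
      intro k
      rw [dist_eq_norm, norm_sub_rev]
    exact cauchySeq_tendsto_of_complete hcauchy
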